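/- Let f be a homeomorphism of ℝ and I an open set with f(I) ∩ I = ∅ and moreover fⁿ(I) ∩ I = ∅ for all n ≠ 0. If h is a homeomorphism of ℝ supported on I, then the maps f⁻ⁿ h^(2ⁿ) fⁿ for n ≥ 0 (on f⁻ⁿ(I)) together with suitable 2ⁿ-th roots on fⁿ(I) define a homeomorphism g of ℝ, supported on ⋃ₙ fⁿ(I), equal to h on I, and satisfying f g f⁻¹ = g². -/

import Mathlib

open Set Equiv Function
noncomputable section
namespace ExtendRel

lemma symm_sm (σ : Equiv.Perm ℝ) (hσ : StrictMono ⇑σ) : StrictMono ⇑σ.symm :=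
  fun a b h => hσ.lt_iff_lt.mp (by simpa using h)

lemma zpow_sm (σ : Equiv.Perm ℝ) (hσ : StrictMono ⇑σ) : ∀ n : ℤ, StrictMono ⇑(σ ^ n) := by
  intro n
  induction n using Int.induction_on with
  | zero => simpa using strictMono_id
  | succ n ih =>
      have e : σ ^ ((n : ℤ) + 1) = σ ^ (n : ℤ) * σ := by rw [zpow_add_one]
      rw [e]
      have := ih.comp hσ
      intro a b hab
      simpa [Equiv.Perm.mul_apply] using this hab
  | pred n ih =>
      have e : σ ^ (-(n : ℤ) - 1) = σ ^ (-(n : ℤ)) * σ⁻¹ := by rw [zpow_sub_one]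
      rw [e]
      have := ih.comp (symm_sm σ hσ)
      intro a b hab
      have h2 : σ⁻¹ = σ.symm := rfl
      simpa [Equiv.Perm.mul_apply, h2] using this hab

/-- interval lemma -/
lemma icc_subset (G : Equiv.Perm ℝ) (hG : StrictMono ⇑G) {S : Set ℝ}
    (hs : ∀ y, G y ≠ y → y ∈ S) {x : ℝ} (hx : x ∈ S) :
    Icc (x ⊓ G x) (x ⊔ G x) ⊆ S := by
  intro t ht
  rcases eq_or_ne (G x) x with hfix | hmove
  · rw [hfix] at ht; simp at ht; rwa [ht]
  rcases eq_or_ne t x with rfl | htx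
  · exact hx
  rcases eq_or_ne t (G x) with rfl | htg
  · exact hs _ (fun e => hmove (G.injective e))
  apply hs
  intro hGt
  rcases lt_or_gt_of_ne hmove with hlt | hgt
  · have h1 : G x ≤ t := by
      have := ht.1; rwa [inf_eq_right.mpr hlt.le] at this
    have h2 : t ≤ x := by
      have := ht.2; rwa [sup_eq_left.mpr hlt.le] at this
    have h3 : t < x := lt_of_le_of_ne h2 htx
    have : G t < G x := hG h3
    rw [hGt] at this
    exact absurd this (not_lt.mpr (lt_of_le_of_ne h1 (Ne.symm htg)).le)
  · have h1 : x ≤ t := by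
      have := ht.1; rwa [inf_eq_left.mpr hgt.le] at this
    have h2 : t ≤ G x := by
      have := ht.2; rwa [sup_eq_right.mpr hgt.le] at this
    have h3 : x < t := lt_of_le_of_ne h1 (Ne.symm htx)
    have : G x < G t := hG h3
    rw [hGt] at this
    exact absurd this (not_lt.mpr (lt_of_le_of_ne h2 htg).le)


lemma glue {ι : Type*} (S : ι → Set ℝ)
    (hdisj : ∀ i j, S i = S j ∨ Disjoint (S i) (S j))
    (k : ℝ → ℝ)
    (hid : ∀ x, (∀ i, x ∉ S i) → k x = x)
    (hmaps : ∀ i, MapsTo k (S i) (S i))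
    (hmono : ∀ i, StrictMonoOn k (S i))
    (hint : ∀ i, ∀ x ∈ S i, Icc (x ⊓ k x) (x ⊔ k x) ⊆ S i)
    (hsurj : ∀ i, SurjOn k (S i) (S i)) :
    StrictMono k ∧ Function.Surjective k := by
  constructor
  · intro x y hxy
    by_cases hx : ∃ i, x ∈ S i
    · obtain ⟨i, hxi⟩ := hx
      by_cases hy : ∃ j, y ∈ S j
      · obtain ⟨j, hyj⟩ := hy
        rcases hdisj i j with heq | hd
        · exact hmono i hxi (heq ▸ hyj) hxy
        · -- k x < y
          have h1 : k x < y := by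
            by_contra hc
            push_neg at hc
            have : y ∈ Icc (x ⊓ k x) (x ⊔ k x) :=
              ⟨le_trans inf_le_left hxy.le, le_trans hc le_sup_right⟩
            exact (hd.le_bot ⟨hint i x hxi this, hyj⟩).elim
          by_contra hc
          push_neg at hc
          have hkx : k x ∈ S i := hmaps i hxi
          have : k x ∈ Icc (y ⊓ k y) (y ⊔ k y) :=
            ⟨le_trans inf_le_right hc, le_trans h1.le le_sup_left⟩
          exact (hd.le_bot ⟨hkx, hint j y hyj this⟩).elim
      · push_neg at hy
        rw [hid y hy]
        by_contra hc
        push_neg at hc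
        have : y ∈ Icc (x ⊓ k x) (x ⊔ k x) :=
          ⟨le_trans inf_le_left hxy.le, le_trans hc le_sup_right⟩
        exact hy i (hint i x hxi this)
    · push_neg at hx
      rw [hid x hx]
      by_cases hy : ∃ j, y ∈ S j
      · obtain ⟨j, hyj⟩ := hy
        by_contra hc
        push_neg at hc
        have : x ∈ Icc (y ⊓ k y) (y ⊔ k y) :=
          ⟨le_trans inf_le_right hc, le_trans hxy.le le_sup_left⟩
        exact hx j (hint j y hyj this)
      · push_neg at hy
        rw [hid y hy]; exact hxy
  · intro y
    by_cases hy : ∃ i, y ∈ S i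
    · obtain ⟨i, hyi⟩ := hy
      obtain ⟨x, hx, hkx⟩ := hsurj i hyi
      exact ⟨x, hkx⟩
    · push_neg at hy
      exact ⟨y, hid y hy⟩


lemma cont (σ : Equiv.Perm ℝ) (hσ : StrictMono ⇑σ) : Continuous ⇑σ :=
  hσ.monotone.continuous_of_surjective σ.surjective

def k0 (σ : Equiv.Perm ℝ) (c : ℝ) (t : ℝ) : ℝ :=
  if t < c + (σ c - c)/2 then t + (σ c - c)/2 else σ (t - (σ c - c)/2)

open scoped Classical in
def nn (σ : Equiv.Perm ℝ) (c : ℝ) (x : ℝ) : ℤ :=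
  if hx : ∃ n : ℤ, (σ ^ n) c ≤ x ∧ x < (σ ^ (n+1)) c then hx.choose else 0

def sD (σ : Equiv.Perm ℝ) (c : ℝ) (x : ℝ) : ℝ := (σ ^ nn σ c x).symm x

def Fmap (σ : Equiv.Perm ℝ) (c : ℝ) (x : ℝ) : ℝ := (σ ^ nn σ c x) (k0 σ c (sD σ c x))

def Gmap (σ : Equiv.Perm ℝ) (c : ℝ) (x : ℝ) : ℝ :=
  if c + (σ c - c)/2 ≤ sD σ c x
  then (σ ^ nn σ c x) (sD σ c x - (σ c - c)/2)
  else (σ ^ (nn σ c x - 1)) (sD σ c x + (σ c - c)/2)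

section comp

variable (σ : Equiv.Perm ℝ) (c : ℝ) (C : Set ℝ)
variable (hσ : StrictMono ⇑σ) (hC : C.OrdConnected)
variable (hfix : ∀ t ∈ C, σ t ≠ t)
variable (hmapsC : ∀ t ∈ C, σ t ∈ C) (hmapsC' : ∀ t ∈ C, σ.symm t ∈ C)
variable (hcC : c ∈ C) (hc : c < σ c)

lemma ap1 (n : ℤ) (t : ℝ) : (σ ^ (n+1)) t = (σ ^ n) (σ t) := by
  rw [zpow_add_one]; rfl

lemma ap2 (n : ℤ) (t : ℝ) : (σ ^ (n+1)) t = σ ((σ ^ n) t) := by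
  rw [add_comm, zpow_add, zpow_one]; rfl

include hmapsC hmapsC' in
lemma zmapsC : ∀ n : ℤ, ∀ t ∈ C, (σ ^ n) t ∈ C := by
  intro n
  induction n using Int.induction_on with
  | zero => simpa using fun t ht => ht
  | succ n ih => intro t ht; rw [ap2]; exact hmapsC _ (ih t ht)
  | pred n ih =>
      intro t ht
      have e : σ ^ (-(n:ℤ) - 1) = σ⁻¹ * σ ^ (-(n:ℤ)) := by
        rw [show -(n:ℤ)-1 = -1 + -(n:ℤ) by ring, zpow_add, zpow_neg_one]
      rw [e]
      exact hmapsC' _ (ih t ht)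

include hσ hC hfix hcC hc in
lemma hlt : ∀ t ∈ C, t < σ t := by
  intro t ht
  rcases lt_trichotomy t (σ t) with h | h | h
  · exact h
  · exact absurd h.symm (hfix t ht)
  · exfalso
    have hcont : ContinuousOn (fun x => σ x - x) (uIcc t c) :=
      ((cont σ hσ).sub continuous_id).continuousOn
    have h0 : (0:ℝ) ∈ uIcc (σ t - t) (σ c - c) := by
      rcases le_total (σ t - t) (σ c - c) with hh | hh
      · rw [uIcc_of_le hh]; constructor <;> [linarith; linarith]
      · rw [uIcc_of_ge hh]; constructor <;> [linarith; linarith]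
    obtain ⟨u, hu, hu0⟩ := intermediate_value_uIcc hcont h0
    have huC : u ∈ C := hC.uIcc_subset ht hcC hu
    exact hfix u huC (by dsimp at hu0; linarith)

include hσ hC hfix hmapsC hmapsC' hcC hc in
lemma zpow_lt : ∀ t ∈ C, ∀ {n m : ℤ}, n < m → (σ ^ n) t < (σ ^ m) t := by
  have key : ∀ t ∈ C, ∀ j : ℕ, t < (σ ^ ((j:ℤ)+1)) t := by
    intro t ht j
    induction j with
    | zero => simpa using hlt σ c C hσ hC hfix hcC hc t ht
    | succ j ih =>
        have h1 : (σ ^ ((j:ℤ)+1)) t ∈ C := zmapsC σ C hmapsC hmapsC' _ t ht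
        have h2 : (σ ^ ((j:ℤ)+1)) t < σ ((σ ^ ((j:ℤ)+1)) t) := hlt σ c C hσ hC hfix hcC hc _ h1
        have e2 : (σ ^ (((j+1:ℕ):ℤ)+1)) t = σ ((σ ^ ((j:ℤ)+1)) t) := by
          rw [show ((j+1:ℕ):ℤ)+1 = ((j:ℤ)+1)+1 by push_cast; ring, ap2]
        rw [e2]; exact ih.trans h2
  intro t ht n m hnm
  have e : (σ ^ m) t = (σ ^ n) ((σ ^ (m - n)) t) := by
    rw [← Equiv.Perm.mul_apply, ← zpow_add]; ring_nf
  rw [e]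
  apply zpow_sm σ hσ n
  obtain ⟨j, hj⟩ : ∃ j : ℕ, m - n = (j:ℤ) + 1 := by
    refine ⟨(m - n - 1).toNat, ?_⟩
    omega
  rw [hj]
  exact key t ht j

include hσ hC hfix hmapsC hmapsC' hcC hc in
lemma zpow_le : ∀ t ∈ C, ∀ {n m : ℤ}, n ≤ m → (σ ^ n) t ≤ (σ ^ m) t := by
  intro t ht n m hnm
  rcases eq_or_lt_of_le hnm with rfl | hlt'
  · exact le_rfl
  · exact (zpow_lt σ c C hσ hC hfix hmapsC hmapsC' hcC hc t ht hlt').le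

include hσ hC hfix hmapsC hmapsC' hcC hc in
lemma exists_up : ∀ x ∈ C, ∃ n : ℕ, x < (σ ^ (n:ℤ)) c := by
  intro x hx
  by_contra hcon
  push_neg at hcon
  have bdd : BddAbove (range (fun n : ℕ => (σ ^ (n:ℤ)) c)) :=
    ⟨x, by rintro _ ⟨n, rfl⟩; exact hcon n⟩
  set s := ⨆ n : ℕ, (σ ^ (n:ℤ)) c with hs
  have hcs : c ≤ s := by
    have := le_ciSup bdd 0
    exact (show c = (σ ^ ((0:ℕ):ℤ)) c by simp).trans_le this
  have hsx : s ≤ x := ciSup_le hcon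
  have hsC : s ∈ C := hC.out hcC hx ⟨hcs, hsx⟩
  have hσs : σ s = s := by
    have h1 : σ s = ⨆ n : ℕ, σ ((σ ^ (n:ℤ)) c) :=
      Monotone.map_ciSup_of_continuousAt ((cont σ hσ).continuousAt) hσ.monotone bdd
    have h2 : ∀ n : ℕ, σ ((σ ^ (n:ℤ)) c) = (σ ^ (((n+1:ℕ)):ℤ)) c := fun n => by
      rw [show (((n+1:ℕ)):ℤ) = (n:ℤ)+1 by push_cast; ring, ap2]
    rw [h1]
    simp_rw [h2]
    apply le_antisymm
    · exact ciSup_le fun n => le_ciSup bdd (n+1)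
    · refine ciSup_le fun n => ?_
      have bdd2 : BddAbove (range (fun n : ℕ => (σ ^ (((n+1:ℕ)):ℤ)) c)) :=
        ⟨x, by rintro _ ⟨m, rfl⟩; exact hcon (m+1)⟩
      exact (zpow_le σ c C hσ hC hfix hmapsC hmapsC' hcC hc c hcC
        (by push_cast; omega)).trans (le_ciSup bdd2 n)
  exact hfix s hsC hσs


include hσ hC hfix hmapsC hmapsC' hcC hc in
lemma exists_down : ∀ x ∈ C, ∃ n : ℕ, (σ ^ (-(n:ℤ))) c ≤ x := by
  intro x hx
  by_contra hcon
  push_neg at hcon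
  have bdd : BddBelow (range (fun n : ℕ => (σ ^ (-(n:ℤ))) c)) :=
    ⟨x, by rintro _ ⟨n, rfl⟩; exact (hcon n).le⟩
  set s := ⨅ n : ℕ, (σ ^ (-(n:ℤ))) c with hs
  have hcs : s ≤ c := by
    have h5 : s ≤ (σ ^ (-((0:ℕ):ℤ))) c := ciInf_le bdd 0
    have h6 : (σ ^ (-((0:ℕ):ℤ))) c = c := by norm_num
    rwa [h6] at h5
  have hsx : x ≤ s := le_ciInf fun n => (hcon n).le
  have hsC : s ∈ C := hC.out hx hcC ⟨hsx, hcs⟩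
  have hσs : σ s = s := by
    have h1 : σ s = ⨅ n : ℕ, σ ((σ ^ (-(n:ℤ))) c) :=
      Monotone.map_ciInf_of_continuousAt ((cont σ hσ).continuousAt) hσ.monotone bdd
    have h2 : ∀ n : ℕ, σ ((σ ^ (-(n:ℤ))) c) = (σ ^ (-(n:ℤ)+1)) c := fun n => by
      rw [show -(n:ℤ)+1 = (-(n:ℤ))+1 by ring, ap2]
    rw [h1]
    simp_rw [h2]
    have bdd2 : BddBelow (range (fun n : ℕ => (σ ^ (-(n:ℤ)+1)) c)) := by
      refine ⟨x, ?_⟩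
      rintro _ ⟨m, rfl⟩
      cases m with
      | zero =>
          show x ≤ (σ ^ (-((0:ℕ):ℤ)+1)) c
          have hxc : x < c := by
            have h5 := hcon 0
            have h6 : (σ ^ (-((0:ℕ):ℤ))) c = c := by norm_num
            rwa [h6] at h5
          have h7 : (σ ^ (-((0:ℕ):ℤ)+1)) c = σ c := by norm_num
          rw [h7]
          exact (hxc.trans_le hc.le).le
      | succ m =>
          show x ≤ (σ ^ (-(((m+1):ℕ):ℤ)+1)) c
          rw [show -(((m+1):ℕ):ℤ)+1 = -(m:ℤ) by push_cast; ring]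
          exact (hcon m).le
    apply le_antisymm
    · refine le_ciInf fun m => ?_
      have h5 : (⨅ n : ℕ, (σ ^ (-(n:ℤ)+1)) c) ≤ (σ ^ (-(((m+1):ℕ):ℤ)+1)) c := ciInf_le bdd2 (m+1)
      rwa [show -(((m+1):ℕ):ℤ)+1 = -(m:ℤ) by push_cast; ring] at h5
    · refine le_ciInf fun n => ?_
      exact (ciInf_le bdd n).trans
        (zpow_le σ c C hσ hC hfix hmapsC hmapsC' hcC hc c hcC (by omega))
  exact hfix s hsC hσs

include hσ hC hfix hmapsC hmapsC' hcC hc in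
lemma nn_eq (x : ℝ) (n : ℤ) (h1 : (σ ^ n) c ≤ x) (h2 : x < (σ ^ (n+1)) c) :
    nn σ c x = n := by
  have hex : ∃ m : ℤ, (σ ^ m) c ≤ x ∧ x < (σ ^ (m+1)) c := ⟨n, h1, h2⟩
  rw [nn, dif_pos hex]
  obtain ⟨h3, h4⟩ := hex.choose_spec
  set m := hex.choose with hm
  by_contra hne
  rcases lt_or_gt_of_ne hne with hlt' | hgt'
  · have h5 : (σ ^ (m+1)) c ≤ (σ ^ n) c :=
      zpow_le σ c C hσ hC hfix hmapsC hmapsC' hcC hc c hcC (by omega)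
    exact absurd (h4.trans_le (h5.trans h1)) (lt_irrefl x)
  · have h5 : (σ ^ (n+1)) c ≤ (σ ^ m) c :=
      zpow_le σ c C hσ hC hfix hmapsC hmapsC' hcC hc c hcC (by omega)
    exact absurd (h2.trans_le (h5.trans h3)) (lt_irrefl x)

include hσ hC hfix hmapsC hmapsC' hcC hc in
lemma nn_spec (x : ℝ) (hx : x ∈ C) :
    (σ ^ nn σ c x) c ≤ x ∧ x < (σ ^ (nn σ c x + 1)) c := by
  obtain ⟨n1, hup⟩ := exists_up σ c C hσ hC hfix hmapsC hmapsC' hcC hc x hx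
  obtain ⟨n0, hdown⟩ := exists_down σ c C hσ hC hfix hmapsC hmapsC' hcC hc x hx
  obtain ⟨n, hn1, hn2⟩ : ∃ n : ℤ, ((σ ^ n) c ≤ x ∧ ∀ z : ℤ, (σ ^ z) c ≤ x → z ≤ n) := by
    apply Int.exists_greatest_of_bdd
    · refine ⟨(n1:ℤ), fun z hz => ?_⟩
      by_contra hzb
      push_neg at hzb
      have h6 : (σ ^ ((n1:ℕ):ℤ)) c ≤ (σ ^ z) c :=
        zpow_le σ c C hσ hC hfix hmapsC hmapsC' hcC hc c hcC (by omega)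
      exact absurd (hup.trans_le (h6.trans hz)) (lt_irrefl x)
    · exact ⟨-(n0:ℤ), hdown⟩
  have h2 : x < (σ ^ (n+1)) c := by
    by_contra hcon
    push_neg at hcon
    exact absurd (hn2 (n+1) hcon) (by omega)
  rw [nn_eq σ c C hσ hC hfix hmapsC hmapsC' hcC hc x n hn1 h2]
  exact ⟨hn1, h2⟩

include hσ hC hfix hmapsC hmapsC' hcC hc in
lemma sD_mem (x : ℝ) (hx : x ∈ C) :
    sD σ c x ∈ Ico c (σ c) ∧ (σ ^ nn σ c x) (sD σ c x) = x := by
  obtain ⟨h1, h2⟩ := nn_spec σ c C hσ hC hfix hmapsC hmapsC' hcC hc x hx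
  set n := nn σ c x with hn
  have hsymm : StrictMono ⇑(σ ^ n).symm := symm_sm _ (zpow_sm σ hσ n)
  constructor
  · constructor
    · have := hsymm.monotone h1
      simpa [sD, ← hn] using this
    · have h3 : x < (σ ^ n) (σ c) := by rwa [← ap1]
      have := hsymm h3
      simpa [sD, ← hn] using this
  · exact (σ ^ n).apply_symm_apply x

lemma nn_shift (hσ2 : StrictMono ⇑σ) (hC2 : C.OrdConnected)
    (hfix2 : ∀ t ∈ C, σ t ≠ t)
    (hmapsC2 : ∀ t ∈ C, σ t ∈ C) (hmapsC2' : ∀ t ∈ C, σ.symm t ∈ C)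
    (hcC2 : c ∈ C) (hc2 : c < σ c)
    (q : ℤ) (s' : ℝ) (hs' : s' ∈ Ico c (σ c)) :
    nn σ c ((σ ^ q) s') = q ∧ sD σ c ((σ ^ q) s') = s' := by
  have h1 : (σ ^ q) c ≤ (σ ^ q) s' := (zpow_sm σ hσ2 q).monotone hs'.1
  have h2 : (σ ^ q) s' < (σ ^ (q+1)) c := by
    rw [ap1]
    exact zpow_sm σ hσ2 q hs'.2
  have he := nn_eq σ c C hσ2 hC2 hfix2 hmapsC2 hmapsC2' hcC2 hc2 ((σ ^ q) s') q h1 h2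
  refine ⟨he, ?_⟩
  rw [sD, he]
  exact (σ ^ q).symm_apply_apply s'

include hC hmapsC hcC in
lemma D_subC : Ico c (σ c) ⊆ C :=
  fun t ht => hC.out hcC (hmapsC c hcC) ⟨ht.1, ht.2.le⟩

include hσ hc in
lemma k0_mem (t : ℝ) (ht : t ∈ Ico c (σ c)) :
    k0 σ c t ∈ Ico (c + (σ c - c)/2) (σ (c + (σ c - c)/2)) := by
  have hd : 0 < σ c - c := by linarith
  rw [k0]
  split_ifs with hb
  · constructor
    · have := ht.1; linarith
    · have h2 : t + (σ c - c)/2 < σ c := by linarith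
      have h3 : σ c < σ (c + (σ c - c)/2) := hσ (by linarith)
      linarith
  · push_neg at hb
    constructor
    · have h2 : σ c ≤ σ (t - (σ c - c)/2) := hσ.monotone (by linarith)
      linarith
    · exact hσ (by linarith [ht.2])

include hσ hc in
lemma k0_mono : StrictMonoOn (k0 σ c) (Ico c (σ c)) := by
  have hd : 0 < σ c - c := by linarith
  intro t1 h1 t2 h2 h12
  rw [k0, k0]
  split_ifs with ha hb hb
  · linarith
  · have h3 : t1 + (σ c - c)/2 < σ c := by linarith
    push_neg at hb
    have h4 : σ c ≤ σ (t2 - (σ c - c)/2) := hσ.monotone (by linarith)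
    linarith
  · push_neg at ha
    linarith
  · exact hσ (by linarith)

lemma comm_pow (n : ℤ) (t : ℝ) : (σ ^ n) (σ t) = σ ((σ ^ n) t) := by
  rw [← ap1, ap2]

include hσ hC hfix hmapsC hmapsC' hcC hc in
lemma m_mem : c + (σ c - c)/2 ∈ C := by
  apply D_subC σ c C hC hmapsC hcC
  constructor <;> [linarith; linarith]

include hσ hC hfix hmapsC hmapsC' hcC hc in
lemma Im_subC : Ico (c + (σ c - c)/2) (σ (c + (σ c - c)/2)) ⊆ C := by
  intro u hu
  have hm : c + (σ c - c)/2 ∈ C := m_mem σ c C hσ hC hfix hmapsC hmapsC' hcC hc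
  exact hC.out hm (hmapsC _ hm) ⟨hu.1, hu.2.le⟩

include hσ hC hfix hmapsC hmapsC' hcC hc in
lemma F_mem (x : ℝ) (hx : x ∈ C) : Fmap σ c x ∈ C := by
  obtain ⟨hsD, hrep⟩ := sD_mem σ c C hσ hC hfix hmapsC hmapsC' hcC hc x hx
  have h1 := k0_mem σ c hσ hc _ hsD
  exact zmapsC σ C hmapsC hmapsC' _ _ (Im_subC σ c C hσ hC hfix hmapsC hmapsC' hcC hc h1)

include hσ hC hfix hmapsC hmapsC' hcC hc in
lemma F_bounds (x : ℝ) (hx : x ∈ C) :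
    (σ ^ nn σ c x) (c + (σ c - c)/2) ≤ Fmap σ c x ∧
      Fmap σ c x < (σ ^ (nn σ c x + 1)) (c + (σ c - c)/2) := by
  obtain ⟨hsD, hrep⟩ := sD_mem σ c C hσ hC hfix hmapsC hmapsC' hcC hc x hx
  have h1 := k0_mem σ c hσ hc _ hsD
  constructor
  · exact (zpow_sm σ hσ _).monotone h1.1
  · rw [ap1]
    exact zpow_sm σ hσ _ h1.2

include hσ hC hfix hmapsC hmapsC' hcC hc in
lemma F_mono : StrictMonoOn (Fmap σ c) C := by
  intro x hx y hy hxy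
  obtain ⟨hsx, hrx⟩ := sD_mem σ c C hσ hC hfix hmapsC hmapsC' hcC hc x hx
  obtain ⟨hsy, hry⟩ := sD_mem σ c C hσ hC hfix hmapsC hmapsC' hcC hc y hy
  obtain ⟨hx1, hx2⟩ := nn_spec σ c C hσ hC hfix hmapsC hmapsC' hcC hc x hx
  obtain ⟨hy1, hy2⟩ := nn_spec σ c C hσ hC hfix hmapsC hmapsC' hcC hc y hy
  set nx := nn σ c x with hnx
  set ny := nn σ c y with hny
  have hnxy : nx ≤ ny := by
    by_contra hcon
    push_neg at hcon
    have h5 : (σ ^ (ny+1)) c ≤ (σ ^ nx) c :=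
      zpow_le σ c C hσ hC hfix hmapsC hmapsC' hcC hc c hcC (by omega)
    exact absurd ((hxy.trans hy2).trans_le (h5.trans hx1)) (lt_irrefl x)
  rcases eq_or_lt_of_le hnxy with heq | hlt2
  · have hsxy : sD σ c x < sD σ c y := by
      rw [sD, sD, ← hnx, ← hny, ← heq]
      exact symm_sm _ (zpow_sm σ hσ nx) hxy
    have h6 : k0 σ c (sD σ c x) < k0 σ c (sD σ c y) :=
      k0_mono σ c hσ hc hsx hsy hsxy
    rw [Fmap, Fmap, ← hnx, ← hny, ← heq]
    exact zpow_sm σ hσ nx h6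
  · have b1 := (F_bounds σ c C hσ hC hfix hmapsC hmapsC' hcC hc x hx).2
    have b2 := (F_bounds σ c C hσ hC hfix hmapsC hmapsC' hcC hc y hy).1
    have hmm : c + (σ c - c)/2 ∈ C := m_mem σ c C hσ hC hfix hmapsC hmapsC' hcC hc
    have h5 : (σ ^ (nx+1)) (c + (σ c - c)/2) ≤ (σ ^ ny) (c + (σ c - c)/2) :=
      zpow_le σ c C hσ hC hfix hmapsC hmapsC' hcC hc _ hmm (by omega)
    exact b1.trans_le (h5.trans b2)

include hσ hC hfix hmapsC hmapsC' hcC hc in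
lemma F_sq (x : ℝ) (hx : x ∈ C) : Fmap σ c (Fmap σ c x) = σ x := by
  obtain ⟨hsx, hrx⟩ := sD_mem σ c C hσ hC hfix hmapsC hmapsC' hcC hc x hx
  set n := nn σ c x with hn
  set s := sD σ c x with hs
  have hd : 0 < σ c - c := by linarith
  by_cases hb : s < c + (σ c - c)/2
  · have e1 : Fmap σ c x = (σ ^ n) (s + (σ c - c)/2) := by
      rw [Fmap, ← hn, ← hs, k0, if_pos hb]
    have hs2 : s + (σ c - c)/2 ∈ Ico c (σ c) := ⟨by linarith [hsx.1], by linarith⟩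
    obtain ⟨e2, e3⟩ := nn_shift σ c C hσ hC hfix hmapsC hmapsC' hcC hc n _ hs2
    rw [e1, Fmap, e2, e3, k0, if_neg (not_lt.mpr (by linarith [hsx.1]))]
    rw [show s + (σ c - c)/2 - (σ c - c)/2 = s by ring, comm_pow, hrx]
  · push_neg at hb
    have e1 : Fmap σ c x = (σ ^ (n+1)) (s - (σ c - c)/2) := by
      rw [Fmap, ← hn, ← hs, k0, if_neg (not_lt.mpr hb), ap1]
    have hs2 : s - (σ c - c)/2 ∈ Ico c (σ c) := ⟨by linarith, by linarith [hsx.2]⟩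
    obtain ⟨e2, e3⟩ := nn_shift σ c C hσ hC hfix hmapsC hmapsC' hcC hc (n+1) _ hs2
    rw [e1, Fmap, e2, e3, k0, if_pos (by linarith [hsx.2])]
    rw [show s - (σ c - c)/2 + (σ c - c)/2 = s by ring, ap2, hrx]

include hσ hC hfix hmapsC hmapsC' hcC hc in
lemma F_G (y : ℝ) (hy : y ∈ C) : Gmap σ c y ∈ C ∧ Fmap σ c (Gmap σ c y) = y := by
  obtain ⟨hsy, hry⟩ := sD_mem σ c C hσ hC hfix hmapsC hmapsC' hcC hc y hy
  set n := nn σ c y with hn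
  set s := sD σ c y with hs
  have hd : 0 < σ c - c := by linarith
  rw [Gmap, ← hn, ← hs]
  by_cases hb : c + (σ c - c)/2 ≤ s
  · rw [if_pos hb]
    have hs2 : s - (σ c - c)/2 ∈ Ico c (σ c) := ⟨by linarith, by linarith [hsy.2]⟩
    obtain ⟨e2, e3⟩ := nn_shift σ c C hσ hC hfix hmapsC hmapsC' hcC hc n _ hs2
    refine ⟨zmapsC σ C hmapsC hmapsC' n _ (D_subC σ c C hC hmapsC hcC hs2), ?_⟩
    rw [Fmap, e2, e3, k0, if_pos (by linarith [hsy.2])]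
    rw [show s - (σ c - c)/2 + (σ c - c)/2 = s by ring, hry]
  · push_neg at hb
    rw [if_neg (not_le.mpr hb)]
    have hs2 : s + (σ c - c)/2 ∈ Ico c (σ c) := ⟨by linarith [hsy.1], by linarith⟩
    obtain ⟨e2, e3⟩ := nn_shift σ c C hσ hC hfix hmapsC hmapsC' hcC hc (n-1) _ hs2
    refine ⟨zmapsC σ C hmapsC hmapsC' (n-1) _ (D_subC σ c C hC hmapsC hcC hs2), ?_⟩
    rw [Fmap, e2, e3, k0, if_neg (not_lt.mpr (by linarith [hsy.1]))]
    rw [show s + (σ c - c)/2 - (σ c - c)/2 = s by ring]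
    have e4 : (σ ^ (n-1)) (σ s) = (σ ^ n) s := by
      have := ap1 σ (n-1) s
      rw [show n - 1 + 1 = n by ring] at this
      exact this.symm
    rw [e4, hry]

include hσ hC hfix hmapsC hmapsC' hcC hc in
lemma G_mem (y : ℝ) (hy : y ∈ C) : Gmap σ c y ∈ C := (F_G σ c C hσ hC hfix hmapsC hmapsC' hcC hc y hy).1

include hσ hC hfix hmapsC hmapsC' hcC hc in
lemma G_F (x : ℝ) (hx : x ∈ C) : Gmap σ c (Fmap σ c x) = x := by
  have h1 := F_G σ c C hσ hC hfix hmapsC hmapsC' hcC hc (Fmap σ c x) (F_mem σ c C hσ hC hfix hmapsC hmapsC' hcC hc x hx)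
  exact (F_mono σ c C hσ hC hfix hmapsC hmapsC' hcC hc).injOn h1.1 hx h1.2

include hσ hC hfix hmapsC hmapsC' hcC hc in
lemma G_mono : StrictMonoOn (Gmap σ c) C := by
  intro y1 h1 y2 h2 h12
  rcases lt_trichotomy (Gmap σ c y1) (Gmap σ c y2) with h | h | h
  · exact h
  · exfalso
    have e1 := (F_G σ c C hσ hC hfix hmapsC hmapsC' hcC hc y1 h1).2
    have e2 := (F_G σ c C hσ hC hfix hmapsC hmapsC' hcC hc y2 h2).2
    rw [h, e2] at e1
    exact absurd e1 h12.ne'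
  · exfalso
    have h3 := F_mono σ c C hσ hC hfix hmapsC hmapsC' hcC hc (G_mem σ c C hσ hC hfix hmapsC hmapsC' hcC hc y2 h2) (G_mem σ c C hσ hC hfix hmapsC hmapsC' hcC hc y1 h1) h
    rw [(F_G σ c C hσ hC hfix hmapsC hmapsC' hcC hc y1 h1).2, (F_G σ c C hσ hC hfix hmapsC hmapsC' hcC hc y2 h2).2] at h3
    exact absurd h12 (not_lt.mpr h3.le)

include hσ hC hfix hmapsC hmapsC' hcC hc in
lemma G_sq (y : ℝ) (hy : y ∈ C) : Gmap σ c (Gmap σ c y) = σ.symm y := by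
  have hg1 : Gmap σ c y ∈ C := G_mem σ c C hσ hC hfix hmapsC hmapsC' hcC hc y hy
  have hg2 : Gmap σ c (Gmap σ c y) ∈ C := G_mem σ c C hσ hC hfix hmapsC hmapsC' hcC hc _ hg1
  have e1 : Fmap σ c (Gmap σ c (Gmap σ c y)) = Gmap σ c y := (F_G σ c C hσ hC hfix hmapsC hmapsC' hcC hc _ hg1).2
  have e2 : σ (Gmap σ c (Gmap σ c y)) = y := by
    have h3 := (F_sq σ c C hσ hC hfix hmapsC hmapsC' hcC hc _ hg2).symm
    rw [e1, (F_G σ c C hσ hC hfix hmapsC hmapsC' hcC hc y hy).2] at h3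
    exact h3
  exact (Equiv.eq_symm_apply σ).mpr e2

end comp

lemma comp_k (h : Equiv.Perm ℝ) (hh : StrictMono ⇑h) (C : Set ℝ) (hC : C.OrdConnected)
    (hfix : ∀ t ∈ C, h t ≠ t) (hm1 : ∀ t ∈ C, h t ∈ C) (hm2 : ∀ t ∈ C, h.symm t ∈ C)
    (c : ℝ) (hcC : c ∈ C) (b : ℝ → ℝ)
    (hb : b = if c < h c then Fmap h c else Gmap h⁻¹ c) :
    (∀ x ∈ C, b x ∈ C) ∧ StrictMonoOn b C ∧ (∀ x ∈ C, b (b x) = h x) ∧ Set.SurjOn b C C := by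
  by_cases hcase : c < h c
  · rw [hb, if_pos hcase]
    exact ⟨fun x hx => F_mem h c C hh hC hfix hm1 hm2 hcC hcase x hx,
      F_mono h c C hh hC hfix hm1 hm2 hcC hcase,
      fun x hx => F_sq h c C hh hC hfix hm1 hm2 hcC hcase x hx,
      fun y hy => ⟨Gmap h c y, G_mem h c C hh hC hfix hm1 hm2 hcC hcase y hy,
        (F_G h c C hh hC hfix hm1 hm2 hcC hcase y hy).2⟩⟩
  · rw [hb, if_neg hcase]
    have hσ : StrictMono ⇑(h⁻¹) := symm_sm h hh
    have hchc : h c < c := lt_of_le_of_ne (not_lt.mp hcase) (hfix c hcC)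
    have hinv : ∀ t, (h⁻¹ : Equiv.Perm ℝ) t = h.symm t := fun t => rfl
    have hc' : c < (h⁻¹ : Equiv.Perm ℝ) c := by
      have h2 := symm_sm h hh hchc
      rw [h.symm_apply_apply] at h2
      rw [hinv]
      exact h2
    have hfix' : ∀ t ∈ C, (h⁻¹ : Equiv.Perm ℝ) t ≠ t := by
      intro t ht e
      have e2 := congrArg h e
      rw [show h (h⁻¹ t) = t from h.apply_symm_apply t] at e2
      exact hfix t ht e2.symm
    have hm1' : ∀ t ∈ C, (h⁻¹ : Equiv.Perm ℝ) t ∈ C := fun t ht => hm2 t ht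
    have hm2' : ∀ t ∈ C, (h⁻¹ : Equiv.Perm ℝ).symm t ∈ C := fun t ht => by
      have : (h⁻¹ : Equiv.Perm ℝ).symm = h := rfl
      rw [this]
      exact hm1 t ht
    have hsymm_eq : ((h⁻¹ : Equiv.Perm ℝ)).symm = h := rfl
    refine ⟨fun y hy => G_mem h⁻¹ c C hσ hC hfix' hm1' hm2' hcC hc' y hy,
      G_mono h⁻¹ c C hσ hC hfix' hm1' hm2' hcC hc',
      fun y hy => ?_,
      fun y hy => ⟨Fmap h⁻¹ c y, F_mem h⁻¹ c C hσ hC hfix' hm1' hm2' hcC hc' y hy,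
        G_F h⁻¹ c C hσ hC hfix' hm1' hm2' hcC hc' y hy⟩⟩
    have h3 := G_sq h⁻¹ c C hσ hC hfix' hm1' hm2' hcC hc' y hy
    rwa [hsymm_eq] at h3

lemma sqrt_exists (h : Equiv.Perm ℝ) (hh : StrictMono ⇑h) :
    ∃ k : Equiv.Perm ℝ, StrictMono ⇑k ∧ (∀ x, k (k x) = h x) ∧ (∀ x, h x = x → k x = x) := by
  classical
  set U : Set ℝ := {x | h x ≠ x} with hUdef
  have hmemU : ∀ y : ℝ, y ∈ U ↔ h y ≠ y := fun y => Iff.rfl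
  obtain ⟨ptS, hptS⟩ : ∃ p : Set ℝ → ℝ, p = fun S => if hn : S.Nonempty then hn.some else 0 :=
    ⟨_, rfl⟩
  obtain ⟨body, hbody⟩ : ∃ b : Set ℝ → ℝ → ℝ,
      b = fun Cs => if ptS Cs < h (ptS Cs) then Fmap h (ptS Cs) else Gmap h⁻¹ (ptS Cs) :=
    ⟨_, rfl⟩
  obtain ⟨k, hkdef⟩ : ∃ k : ℝ → ℝ,
      k = fun x => if x ∈ U then body (connectedComponentIn U x) x else x := ⟨_, rfl⟩
  have hkeq : ∀ x, k x = if x ∈ U then body (connectedComponentIn U x) x else x :=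
    fun x => by rw [hkdef]
  have compfacts : ∀ i ∈ U,
      (∀ x ∈ connectedComponentIn U i, k x ∈ connectedComponentIn U i) ∧
      StrictMonoOn k (connectedComponentIn U i) ∧
      (∀ x ∈ connectedComponentIn U i, k (k x) = h x) ∧
      Set.SurjOn k (connectedComponentIn U i) (connectedComponentIn U i) := by
    intro i hi
    set C := connectedComponentIn U i with hCdef
    have hCsub : C ⊆ U := connectedComponentIn_subset U i
    have hCne : C.Nonempty := ⟨i, mem_connectedComponentIn hi⟩
    have hcC : ptS C ∈ C := by
      have he : ptS C = hCne.some := by rw [hptS]; exact dif_pos hCne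
      rw [he]; exact hCne.some_mem
    have hCord : C.OrdConnected := isPreconnected_connectedComponentIn.ordConnected
    have hfixC : ∀ t ∈ C, h t ≠ t := fun t ht => hCsub ht
    have hmove : ∀ (g : Equiv.Perm ℝ), StrictMono ⇑g → (∀ y, g y ≠ y → y ∈ U) →
        ∀ t ∈ C, g t ∈ C := by
      intro g hg hgU t ht
      have hIcc : Icc (t ⊓ g t) (t ⊔ g t) ⊆ U := icc_subset g hg hgU (hCsub ht)
      have hsub : Icc (t ⊓ g t) (t ⊔ g t) ⊆ connectedComponentIn U t :=
        isPreconnected_Icc.subset_connectedComponentIn ⟨inf_le_left, le_sup_left⟩ hIcc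
      have hEq : connectedComponentIn U t = C := by
        rw [hCdef] at ht ⊢
        exact (connectedComponentIn_eq ht).symm
      rw [hEq] at hsub
      exact hsub ⟨inf_le_right, le_sup_right⟩
    have hm1 : ∀ t ∈ C, h t ∈ C := hmove h hh (fun y hy => hy)
    have hm2 : ∀ t ∈ C, h.symm t ∈ C := by
      apply hmove h⁻¹ (symm_sm h hh)
      intro y hy
      rw [hmemU]
      intro e
      apply hy
      nth_rewrite 1 [← e]
      exact h.symm_apply_apply y
    have hkC : ∀ x ∈ C, k x = body C x := by
      intro x hx
      have hxU : x ∈ U := hCsub hx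
      have hcc : connectedComponentIn U x = C := by
        rw [hCdef] at hx ⊢
        exact (connectedComponentIn_eq hx).symm
      rw [hkeq, if_pos hxU, hcc]
    obtain ⟨p1, p2, p3, p4⟩ := comp_k h hh C hCord hfixC hm1 hm2 (ptS C) hcC (body C)
      (by rw [hbody])
    refine ⟨fun x hx => by rw [hkC x hx]; exact p1 x hx, ?_, ?_, ?_⟩
    · intro x hx y hy hxy; rw [hkC x hx, hkC y hy]; exact p2 hx hy hxy
    · intro x hx
      have h1 := hkC x hx
      have h2 := hkC (k x) (by rw [h1]; exact p1 x hx)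
      rw [h2, h1]
      exact p3 x hx
    · intro y hy
      obtain ⟨x, hxC, hbx⟩ := p4 hy
      exact ⟨x, hxC, by rw [hkC x hxC]; exact hbx⟩
  obtain ⟨S, hS⟩ : ∃ S : ℝ → Set ℝ,
      S = fun i => if i ∈ U then connectedComponentIn U i else ∅ := ⟨_, rfl⟩
  have hSeq : ∀ i, S i = if i ∈ U then connectedComponentIn U i else ∅ := fun i => by rw [hS]
  have hSU : ∀ i, i ∈ U → S i = connectedComponentIn U i := fun i hi => by
    rw [hSeq, if_pos hi]
  have hSnU : ∀ i, i ∉ U → S i = ∅ := fun i hi => by rw [hSeq, if_neg hi]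
  have hSdisj : ∀ i j, S i = S j ∨ Disjoint (S i) (S j) := by
    intro i j
    by_cases hd : Disjoint (S i) (S j)
    · exact Or.inr hd
    left
    obtain ⟨z, hz1, hz2⟩ := Set.not_disjoint_iff.mp hd
    by_cases hi : i ∈ U
    · by_cases hj : j ∈ U
      · rw [hSU i hi] at hz1; rw [hSU j hj] at hz2
        rw [hSU i hi, hSU j hj, connectedComponentIn_eq hz1]
        exact (connectedComponentIn_eq hz2).symm
      · rw [hSnU j hj] at hz2; exact absurd hz2 (Set.notMem_empty z)
    · rw [hSnU i hi] at hz1; exact absurd hz1 (Set.notMem_empty z)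
  have hid : ∀ x, (∀ i, x ∉ S i) → k x = x := by
    intro x hx
    have hxU : x ∉ U := by
      intro hxU
      exact hx x (by rw [hSU x hxU]; exact mem_connectedComponentIn hxU)
    rw [hkeq, if_neg hxU]
  have hmaps : ∀ i, Set.MapsTo k (S i) (S i) := by
    intro i x hx
    by_cases hi : i ∈ U
    · rw [hSU i hi] at hx ⊢
      exact (compfacts i hi).1 x hx
    · rw [hSnU i hi] at hx; exact absurd hx (Set.notMem_empty x)
  have hmono : ∀ i, StrictMonoOn k (S i) := by
    intro i x hx y hy hxy
    by_cases hi : i ∈ U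
    · rw [hSU i hi] at hx hy
      exact (compfacts i hi).2.1 hx hy hxy
    · rw [hSnU i hi] at hx; exact absurd hx (Set.notMem_empty x)
  have hint : ∀ i, ∀ x ∈ S i, Icc (x ⊓ k x) (x ⊔ k x) ⊆ S i := by
    intro i x hx
    by_cases hi : i ∈ U
    · rw [hSU i hi] at hx ⊢
      have hkx := (compfacts i hi).1 x hx
      have hCord : (connectedComponentIn U i).OrdConnected :=
        isPreconnected_connectedComponentIn.ordConnected
      rcases le_total x (k x) with hle | hle
      · rw [inf_eq_left.mpr hle, sup_eq_right.mpr hle]; exact hCord.out hx hkx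
      · rw [inf_eq_right.mpr hle, sup_eq_left.mpr hle]; exact hCord.out hkx hx
    · rw [hSnU i hi] at hx; exact absurd hx (Set.notMem_empty x)
  have hsurj : ∀ i, Set.SurjOn k (S i) (S i) := by
    intro i y hy
    by_cases hi : i ∈ U
    · rw [hSU i hi] at hy ⊢
      exact (compfacts i hi).2.2.2 hy
    · rw [hSnU i hi] at hy; exact absurd hy (Set.notMem_empty y)
  obtain ⟨hkmono, hksurj⟩ := glue S hSdisj k hid hmaps hmono hint hsurj
  refine ⟨Equiv.ofBijective k ⟨hkmono.injective, hksurj⟩, hkmono, ?_, ?_⟩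
  · intro x
    show k (k x) = h x
    by_cases hxU : x ∈ U
    · exact (compfacts x hxU).2.2.1 x (mem_connectedComponentIn hxU)
    · have e : h x = x := not_not.mp hxU
      have e1 : k x = x := by rw [hkeq, if_neg hxU]
      rw [e1, e1, e]
  · intro x he
    have hxU : x ∉ U := fun hxU => hxU he
    show k x = x
    rw [hkeq, if_neg hxU]

lemma symm_eq_neg (f : Equiv.Perm ℝ) (n : ℤ) : (f ^ n).symm = f ^ (-n) := by
  rw [zpow_neg]; rfl

lemma pC (f : Equiv.Perm ℝ) (a b : ℤ) (x : ℝ) : (f ^ a) ((f ^ b) x) = (f ^ (a+b)) x := by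
  rw [← Equiv.Perm.mul_apply, ← zpow_add]

lemma pow_sm (f : Equiv.Perm ℝ) (hf : StrictMono ⇑f) (m : ℕ) : StrictMono ⇑(f ^ m) := by
  have e : (f ^ m : Equiv.Perm ℝ) = f ^ ((m:ℤ)) := (zpow_natCast f m).symm
  rw [e]
  exact zpow_sm f hf (m:ℤ)

lemma pow_fix (f : Equiv.Perm ℝ) (m : ℕ) (x : ℝ) (hx : f x = x) : (f ^ m) x = x := by
  induction m with
  | zero => simp
  | succ m ih =>
      rw [pow_succ, Equiv.Perm.mul_apply, hx, ih]

end ExtendRel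

open ExtendRel Set

theorem extend_by_relation (f : Equiv.Perm ℝ) (hf : StrictMono ⇑f)
    (I : Set ℝ) (hI : IsOpen I)
    (hdisj : ∀ n : ℤ, n ≠ 0 → (⇑(f ^ n) '' I) ∩ I = ∅)
    (h : Equiv.Perm ℝ) (hh : StrictMono ⇑h)
    (hsupp : {x : ℝ | h x ≠ x} ⊆ I) :
    ∃ g : Equiv.Perm ℝ, StrictMono ⇑g ∧
      (∀ x ∈ I, g x = h x) ∧
      {x : ℝ | g x ≠ x} ⊆ ⋃ n : ℤ, ⇑(f ^ n) '' I ∧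
      ∀ x : ℝ, f (g (f.symm x)) = g (g x) := by
  classical
  -- step: square roots preserving support
  have step : ∀ k : Equiv.Perm ℝ, StrictMono ⇑k → (∀ x, x ∉ I → k x = x) →
      ∃ k' : Equiv.Perm ℝ, StrictMono ⇑k' ∧ (∀ x, x ∉ I → k' x = x) ∧
        ∀ x, k' (k' x) = k x := by
    intro k hk hks
    obtain ⟨k', h1, h2, h3⟩ := sqrt_exists k hk
    exact ⟨k', h1, fun x hx => h3 x (hks x hx), h2⟩
  -- the sequence of iterated square roots
  obtain ⟨R, hR0, hRsm, hRsupp, hRsq⟩ : ∃ R : ℕ → Equiv.Perm ℝ, R 0 = h ∧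
      (∀ n, StrictMono ⇑(R n)) ∧ (∀ n x, x ∉ I → R n x = x) ∧
      (∀ n x, R (n+1) (R (n+1) x) = R n x) := by
    let T : ℕ → {k : Equiv.Perm ℝ // StrictMono ⇑k ∧ ∀ x, x ∉ I → k x = x} :=
      fun n => Nat.rec
        ⟨h, hh, fun x hx => Classical.byContradiction fun e => hx (hsupp e)⟩
        (fun _ p => ⟨Classical.choose (step p.1 p.2.1 p.2.2),
          (Classical.choose_spec (step p.1 p.2.1 p.2.2)).1,
          (Classical.choose_spec (step p.1 p.2.1 p.2.2)).2.1⟩) n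
    refine ⟨fun n => (T n).1, rfl, fun n => (T n).2.1, fun n => (T n).2.2, fun n => ?_⟩
    exact (Classical.choose_spec (step (T n).1 (T n).2.1 (T n).2.2)).2.2
  -- the dyadic family K
  obtain ⟨K, hK⟩ : ∃ K : ℤ → Equiv.Perm ℝ,
      K = fun n => if 0 ≤ n then R n.toNat else h ^ (2 ^ (-n).toNat) := ⟨_, rfl⟩
  have hKpos : ∀ n : ℤ, 0 ≤ n → K n = R n.toNat := fun n hn => by
    rw [hK]; exact if_pos hn
  have hKneg : ∀ n : ℤ, n ≤ 0 → K n = h ^ (2 ^ (-n).toNat) := by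
    intro n hn
    rcases eq_or_lt_of_le hn with rfl | hlt
    · rw [hKpos 0 le_rfl]
      simp [hR0]
    · rw [hK]; exact if_neg (by omega)
  have hKsm : ∀ n : ℤ, StrictMono ⇑(K n) := by
    intro n
    rcases le_or_gt 0 n with hn | hn
    · rw [hKpos n hn]; exact hRsm _
    · rw [hKneg n hn.le]; exact pow_sm h hh _
  have hKsupp : ∀ n : ℤ, ∀ x, x ∉ I → K n x = x := by
    intro n x hx
    rcases le_or_gt 0 n with hn | hn
    · rw [hKpos n hn]; exact hRsupp _ x hx
    · rw [hKneg n hn.le]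
      apply pow_fix
      by_contra e
      exact hx (hsupp e)
  have hKsq : ∀ n : ℤ, ∀ x, K n (K n x) = K (n-1) x := by
    intro n x
    rcases le_or_gt 1 n with hn | hn
    · rw [hKpos n (by omega), hKpos (n-1) (by omega)]
      have e : n.toNat = (n-1).toNat + 1 := by omega
      rw [e]
      exact hRsq _ x
    · rw [hKneg n (by omega), hKneg (n-1) (by omega)]
      have e : (-(n-1)).toNat = (-n).toNat + 1 := by omega
      rw [e, pow_succ 2, ← Equiv.Perm.mul_apply, ← pow_add]
      congr 1
      ring_nf
  -- the pieces
  obtain ⟨A, hA⟩ : ∃ A : ℤ → Set ℝ, A = fun n => ⇑(f ^ n) '' I := ⟨_, rfl⟩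
  have hAeq : ∀ n, A n = ⇑(f ^ n) '' I := fun n => by rw [hA]
  have hAdisj : ∀ n m : ℤ, n ≠ m → Disjoint (A n) (A m) := by
    intro n m hnm
    rw [Set.disjoint_left]
    intro x hxn hxm
    rw [hAeq] at hxn hxm
    obtain ⟨a, haI, rfl⟩ := hxn
    obtain ⟨b, hbI, hba⟩ := hxm
    have e : b = (f ^ (n - m)) a := by
      have e2 : b = (f ^ m).symm ((f ^ n) a) := by rw [← hba, Equiv.symm_apply_apply]
      rw [e2, symm_eq_neg, pC, show -m + n = n - m by ring]
    have hbmem : b ∈ (⇑(f ^ (n-m)) '' I) ∩ I := ⟨⟨a, haI, e.symm⟩, hbI⟩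
    rw [hdisj (n-m) (by omega)] at hbmem
    exact hbmem
  obtain ⟨gf, hgf⟩ : ∃ gg : ℝ → ℝ, gg = fun x =>
      if hx : ∃ n : ℤ, x ∈ A n then
        (f ^ hx.choose) (K hx.choose ((f ^ hx.choose).symm x)) else x := ⟨_, rfl⟩
  have hgfeq : ∀ x, gf x = if hx : ∃ n : ℤ, x ∈ A n then
        (f ^ hx.choose) (K hx.choose ((f ^ hx.choose).symm x)) else x := fun x => by rw [hgf]
  have hmapsI : ∀ n : ℤ, ∀ t ∈ I, K n t ∈ I := by
    intro n t ht
    by_contra hKt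
    have e := hKsupp n _ hKt
    exact hKt (by rw [(K n).injective e]; exact ht)
  have hmapsI' : ∀ n : ℤ, ∀ t ∈ I, (K n).symm t ∈ I := by
    intro n t ht
    by_contra hKt
    have e := hKsupp n _ hKt
    rw [Equiv.apply_symm_apply] at e
    exact hKt (e ▸ ht)
  have gA : ∀ n : ℤ, ∀ x ∈ A n, gf x = (f ^ n) (K n ((f ^ n).symm x)) := by
    intro n x hx
    have hex : ∃ m : ℤ, x ∈ A m := ⟨n, hx⟩
    rw [hgfeq, dif_pos hex]
    have he : hex.choose = n := by
      by_contra hne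
      exact (Set.disjoint_left.mp (hAdisj _ _ hne) hex.choose_spec) hx
    rw [he]
  have hmem : ∀ n : ℤ, ∀ x ∈ A n, gf x ∈ A n ∧ (f ^ n).symm x ∈ I := by
    intro n x hx
    have h2 : (f ^ n).symm x ∈ I := by
      rw [hAeq] at hx
      obtain ⟨a, haI, rfl⟩ := hx
      rwa [Equiv.symm_apply_apply]
    refine ⟨?_, h2⟩
    rw [gA n x hx, hAeq]
    exact ⟨K n ((f ^ n).symm x), hmapsI n _ h2, rfl⟩
  have hmonoA : ∀ n : ℤ, StrictMonoOn gf (A n) := by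
    intro n x hx y hy hxy
    rw [gA n x hx, gA n y hy]
    exact zpow_sm f hf n (hKsm n (symm_sm _ (zpow_sm f hf n) hxy))
  have hintA : ∀ n : ℤ, ∀ x ∈ A n, Icc (x ⊓ gf x) (x ⊔ gf x) ⊆ A n := by
    intro n x hx
    set Gn : Equiv.Perm ℝ := (f ^ n) * K n * (f ^ n)⁻¹ with hGn
    have hGn1 : ∀ y, Gn y = (f ^ n) (K n ((f ^ n).symm y)) := fun y => rfl
    have hGnsm : StrictMono ⇑Gn := by
      intro a b hab
      rw [hGn1, hGn1]
      exact zpow_sm f hf n (hKsm n (symm_sm _ (zpow_sm f hf n) hab))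
    have hGnsupp : ∀ y, Gn y ≠ y → y ∈ A n := by
      intro y hy
      have h3 : K n ((f ^ n).symm y) ≠ (f ^ n).symm y := by
        intro e
        apply hy
        rw [hGn1, e, Equiv.apply_symm_apply]
      have h4 : (f ^ n).symm y ∈ I := by
        by_contra h5
        exact h3 (hKsupp n _ h5)
      rw [hAeq]
      exact ⟨(f ^ n).symm y, h4, Equiv.apply_symm_apply _ _⟩
    have e : gf x = Gn x := by rw [gA n x hx, hGn1]
    rw [e]
    exact icc_subset Gn hGnsm hGnsupp hx
  have hsurjA : ∀ n : ℤ, Set.SurjOn gf (A n) (A n) := by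
    intro n y hy
    have h2 : (f ^ n).symm y ∈ I := (hmem n y hy).2
    set x := (f ^ n) ((K n).symm ((f ^ n).symm y)) with hx
    have hxA : x ∈ A n := by rw [hAeq]; exact ⟨_, hmapsI' n _ h2, rfl⟩
    refine ⟨x, hxA, ?_⟩
    rw [gA n x hxA, hx, Equiv.symm_apply_apply, Equiv.apply_symm_apply,
      Equiv.apply_symm_apply]
  obtain ⟨hgfmono, hgfsurj⟩ := glue A
    (fun i j => if hij : i = j then Or.inl (by rw [hij]) else Or.inr (hAdisj i j hij)) gf
    (fun x hx => by rw [hgfeq, dif_neg (not_exists.mpr hx)])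
    (fun n x hx => (hmem n x hx).1)
    hmonoA hintA hsurjA
  refine ⟨Equiv.ofBijective gf ⟨hgfmono.injective, hgfsurj⟩, hgfmono, ?_, ?_, ?_⟩
  · intro x hx
    show gf x = h x
    have hx0 : x ∈ A 0 := by
      rw [hAeq]
      exact ⟨x, hx, by simp⟩
    have e : gf x = K 0 x := by
      rw [gA 0 x hx0]
      simp [Equiv.Perm.one_symm]
    rw [e, hKpos 0 le_rfl, Int.toNat_zero, hR0]
  · intro x hx
    by_contra hnx
    apply hx
    show gf x = x
    rw [hgfeq, dif_neg]
    rintro ⟨n, hn⟩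
    apply hnx
    rw [hAeq] at hn
    exact Set.mem_iUnion.mpr ⟨n, hn⟩
  · intro x
    show f (gf (f.symm x)) = gf (gf x)
    by_cases hx : ∃ n : ℤ, x ∈ A n
    · obtain ⟨n, hn⟩ := hx
      have hfs : f.symm x ∈ A (n-1) := by
        rw [hAeq] at hn ⊢
        obtain ⟨a, haI, rfl⟩ := hn
        refine ⟨a, haI, ?_⟩
        apply f.injective
        rw [Equiv.apply_symm_apply]
        have := ap2 f (n-1) a
        rw [show n - 1 + 1 = n by ring] at this
        exact this.symm
      have hgx : gf x ∈ A n := (hmem n x hn).1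
      have hgx' : (f ^ n) (K n ((f ^ n).symm x)) ∈ A n := by
        rw [← gA n x hn]
        exact hgx
      rw [gA (n-1) _ hfs, gA n x hn, gA n _ hgx']
      have e1 : ∀ t, f ((f ^ (n-1)) t) = (f ^ n) t := fun t => by
        have := ap2 f (n-1) t
        rw [show n - 1 + 1 = n by ring] at this
        exact this.symm
      have e2 : (f ^ (n-1)).symm (f.symm x) = (f ^ n).symm x := by
        rw [symm_eq_neg, symm_eq_neg,
          show (f.symm x) = (f ^ (-1:ℤ)) x from by rw [zpow_neg_one]; rfl, pC,
          show -(n-1) + -1 = -n by ring]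
      rw [e1, e2, Equiv.symm_apply_apply, hKsq n]
    · push_neg at hx
      have hfsx : ∀ m : ℤ, f.symm x ∉ A m := by
        intro m hm
        apply hx (m+1)
        rw [hAeq] at hm ⊢
        obtain ⟨a, haI, ha⟩ := hm
        refine ⟨a, haI, ?_⟩
        rw [ap2, ha, Equiv.apply_symm_apply]
      have g1 : gf (f.symm x) = f.symm x := by
        rw [hgfeq, dif_neg (not_exists.mpr hfsx)]
      have g2 : gf x = x := by
        rw [hgfeq, dif_neg (not_exists.mpr hx)]
      rw [g1, g2, g2, Equiv.apply_symm_apply]
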